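/- Let r ≥ 1 be an integer and τ ∈ ℂ with Im τ > 0. Let ρ : ℤ → ℂ be such that for every z ∈ ℂ the family m ↦ ρ(m)·exp(2πi·m·z) is absolutely summable, and define g(z) = Σ_{m∈ℤ} ρ(m)·exp(2πi·m·z). Suppose that g(z + n·τ) = exp(−(2r+1)·π·i·(τ·n² + 2n·z))·g(z) for all z ∈ ℂ and all n ∈ ℤ. Then for all m, n ∈ ℤ one has ρ(m + (2r+1)·n) = exp(π·i·τ·n·(2m + (2r+1)·n))·ρ(m). In particular, the sequence (ρ(m))_{m∈ℤ} is determined by ρ(0), …, ρ(2r). -/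

import Mathlib

open Complex MeasureTheory

lemma norm_exp_aux (m : ℤ) (x : ℝ) :
    ‖Complex.exp (2 * Real.pi * Complex.I * (m : ℂ) * (x:ℂ))‖ = 1 := by
  rw [Complex.norm_exp]
  norm_num [Complex.mul_re, Complex.mul_im]

lemma coeff_unique (c : ℤ → ℂ) (hc : Summable fun m => ‖c m‖)
    (h : ∀ x : ℝ, ∑' m : ℤ, c m * Complex.exp (2 * Real.pi * Complex.I * (m : ℂ) * (x:ℂ)) = 0) :
    ∀ k, c k = 0 := by
  intro k
  set μ := volume.restrict (Set.Ioc (0:ℝ) 1) with hμ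
  set F : ℤ → ℝ → ℂ := fun m x =>
    c m * Complex.exp (2 * Real.pi * Complex.I * ((m : ℂ) - (k : ℂ)) * (x:ℂ)) with hF
  have hnorm : ∀ m x, ‖F m x‖ = ‖c m‖ := by
    intro m x
    have : ((m : ℂ) - (k : ℂ)) = ((m - k : ℤ) : ℂ) := by push_cast; ring
    rw [hF]; simp only [this, norm_mul, norm_exp_aux, mul_one]
  have hcont : ∀ m, Continuous (F m) := by
    intro m; exact continuous_const.mul (Complex.continuous_exp.comp (by fun_prop))
  have hint : ∀ m, Integrable (F m) μ := by
    intro m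
    exact (hcont m).integrableOn_Ioc.mono_measure le_rfl |>.congr (by rfl)
  have hμfin : μ Set.univ = 1 := by
    simp [hμ]
  -- tsum of F at each x is 0
  have htsum0 : ∀ x : ℝ, ∑' m, F m x = 0 := by
    intro x
    have := h x
    calc ∑' m, F m x
        = (∑' m, c m * Complex.exp (2 * Real.pi * Complex.I * (m : ℂ) * (x:ℂ))) *
            Complex.exp (-(2 * Real.pi * Complex.I * (k : ℂ) * (x:ℂ))) := by
          rw [← tsum_mul_right]
          congr 1; ext m
          simp only [hF]
          have he : Complex.exp (2 * Real.pi * Complex.I * ((m : ℂ) - (k : ℂ)) * (x:ℂ))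
              = Complex.exp (2 * Real.pi * Complex.I * (m : ℂ) * (x:ℂ)) *
                Complex.exp (-(2 * Real.pi * Complex.I * (k : ℂ) * (x:ℂ))) := by
            rw [← Complex.exp_add]; congr 1; ring
          rw [he]; ring
      _ = 0 := by rw [this, zero_mul]
  have hswap : ∑' m, ∫ x, F m x ∂μ = ∫ x, (∑' m, F m x) ∂μ := by
    apply integral_tsum_of_summable_integral_norm hint
    apply Summable.of_nonneg_of_le (fun m => integral_nonneg (fun x => norm_nonneg _)) _ hc
    intro m
    have : ∫ x, ‖F m x‖ ∂μ = ∫ x, ‖c m‖ ∂μ := by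
      congr 1; ext x; exact hnorm m x
    rw [this, integral_const]
    simp [hμ]
  have hzero : ∑' m, ∫ x, F m x ∂μ = 0 := by
    rw [hswap]
    simp only [htsum0, integral_zero]
  -- compute each integral
  have hInt : ∀ m, ∫ x, F m x ∂μ = if m = k then c k else 0 := by
    intro m
    have hiv : ∫ x, F m x ∂μ = ∫ x in (0:ℝ)..1, F m x := by
      rw [intervalIntegral.integral_of_le zero_le_one]
    by_cases hm : m = k
    · subst hm
      have : ∀ x : ℝ, F m x = c m := by
        intro x; rw [hF]; simp
      rw [hiv]
      simp only [this]
      simp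
    · have hne : (2 * (Real.pi:ℂ) * Complex.I * ((m : ℂ) - (k : ℂ))) ≠ 0 := by
        refine mul_ne_zero (mul_ne_zero ?_ Complex.I_ne_zero) ?_
        · simp [Real.pi_ne_zero, Complex.ofReal_ne_zero]
        · rw [sub_ne_zero]
          exact fun hh => hm (by exact_mod_cast hh)
      rw [hiv]
      have : ∀ x : ℝ, F m x = c m * Complex.exp ((2 * (Real.pi:ℂ) * Complex.I * ((m : ℂ) - (k : ℂ))) * (x:ℂ)) := by
        intro x; rw [hF]
      simp only [this]
      rw [intervalIntegral.integral_const_mul, integral_exp_mul_complex hne]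
      have h1 : Complex.exp (2 * (Real.pi:ℂ) * Complex.I * ((m : ℂ) - (k : ℂ)) * (1:ℝ)) = 1 := by
        push_cast
        rw [mul_one]
        have : (2 * (Real.pi:ℂ) * Complex.I * ((m : ℂ) - (k : ℂ))) = ((m - k : ℤ):ℂ) * (2 * Real.pi * Complex.I) := by push_cast; ring
        rw [this, Complex.exp_int_mul_two_pi_mul_I]
      have h0 : Complex.exp (2 * (Real.pi:ℂ) * Complex.I * ((m : ℂ) - (k : ℂ)) * (0:ℝ)) = 1 := by
        simp
      rw [h1, h0]
      simp [if_neg hm]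
  have := hzero
  rw [tsum_congr hInt] at this
  rwa [tsum_ite_eq] at this



/-- if `g(z) = Σ_{m∈ℤ} ρ(m)·exp(2πi·m·z)` (an absolutely
summable series) satisfies the quasi-periodicity relation
`g(z + n·τ) = exp(−(2r+1)·π·i·(τ·n² + 2n·z))·g(z)` for all `z ∈ ℂ`, `n ∈ ℤ`,
then `ρ(m + (2r+1)·n) = exp(π·i·τ·n·(2m + (2r+1)·n))·ρ(m)` for all `m, n ∈ ℤ`. -/
theorem statement7 (r : ℕ) (hr : 1 ≤ r) (τ : ℂ) (hτ : 0 < τ.im) (ρ : ℤ → ℂ)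
    (hsum : ∀ z : ℂ,
      Summable (fun m : ℤ => ‖ρ m * Complex.exp (2 * Real.pi * Complex.I * (m : ℂ) * z)‖))
    (hg : ∀ (z : ℂ) (n : ℤ),
      (∑' m : ℤ, ρ m * Complex.exp (2 * Real.pi * Complex.I * (m : ℂ) * (z + (n : ℂ) * τ)))
        = Complex.exp (-((2 * (r : ℂ) + 1) * Real.pi * Complex.I *
              (τ * (n : ℂ) ^ 2 + 2 * (n : ℂ) * z)))
          * ∑' m : ℤ, ρ m * Complex.exp (2 * Real.pi * Complex.I * (m : ℂ) * z)) :
    ∀ m n : ℤ,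
      ρ (m + (2 * (r : ℤ) + 1) * n)
        = Complex.exp (Real.pi * Complex.I * τ * (n : ℂ) *
            (2 * (m : ℂ) + (2 * (r : ℂ) + 1) * (n : ℂ))) * ρ m := by
  intro m n
  set K : ℤ := (2 * (r : ℤ) + 1) * n with hK
  set D : ℂ := Complex.exp (-((2 * (r : ℂ) + 1) * Real.pi * Complex.I * (τ * (n : ℂ) ^ 2))) with hD
  set a : ℤ → ℂ := fun m => ρ m * Complex.exp (2 * Real.pi * Complex.I * (m : ℂ) * ((n : ℂ) * τ)) with ha
  set b : ℤ → ℂ := fun m => ρ (m + K) * D with hb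
  have hKc : ((K : ℤ) : ℂ) = (2 * (r : ℂ) + 1) * (n : ℂ) := by rw [hK]; push_cast; ring
  -- summability facts
  have hsa : Summable fun m => ‖a m‖ := hsum ((n : ℂ) * τ)
  have hρ : Summable fun m => ‖ρ m‖ := by
    have := hsum 0
    simpa using this
  have hsb : Summable fun m => ‖b m‖ := by
    have h1 : Summable fun m : ℤ => ‖ρ (m + K)‖ * ‖D‖ :=
      (((Equiv.addRight K).summable_iff).mpr hρ).mul_right _
    exact h1.congr fun j => (norm_mul _ _).symm
  -- pointwise vanishing of the difference series on ℝ
  have h0 : ∀ x : ℝ,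
      ∑' m : ℤ, (a m - b m) * Complex.exp (2 * Real.pi * Complex.I * (m : ℂ) * (x:ℂ)) = 0 := by
    intro x
    have H := hg (x:ℂ) n
    have hL : (∑' m : ℤ, ρ m * Complex.exp (2 * Real.pi * Complex.I * (m : ℂ) * ((x:ℂ) + (n : ℂ) * τ)))
        = ∑' m : ℤ, a m * Complex.exp (2 * Real.pi * Complex.I * (m : ℂ) * (x:ℂ)) := by
      apply tsum_congr; intro j
      rw [ha]
      rw [show (2 * (Real.pi:ℂ) * Complex.I * (j : ℂ) * ((x:ℂ) + (n : ℂ) * τ))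
          = 2 * (Real.pi:ℂ) * Complex.I * (j : ℂ) * ((n : ℂ) * τ)
            + 2 * (Real.pi:ℂ) * Complex.I * (j : ℂ) * (x:ℂ) from by ring,
        Complex.exp_add, ← mul_assoc]
    have hR : Complex.exp (-((2 * (r : ℂ) + 1) * Real.pi * Complex.I *
              (τ * (n : ℂ) ^ 2 + 2 * (n : ℂ) * (x:ℂ))))
          * (∑' m : ℤ, ρ m * Complex.exp (2 * Real.pi * Complex.I * (m : ℂ) * (x:ℂ)))
        = ∑' m : ℤ, b m * Complex.exp (2 * Real.pi * Complex.I * (m : ℂ) * (x:ℂ)) := by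
      rw [← tsum_mul_left]
      have hterm : ∀ j : ℤ,
          Complex.exp (-((2 * (r : ℂ) + 1) * Real.pi * Complex.I *
              (τ * (n : ℂ) ^ 2 + 2 * (n : ℂ) * (x:ℂ))))
            * (ρ j * Complex.exp (2 * Real.pi * Complex.I * (j : ℂ) * (x:ℂ)))
          = ρ j * D * Complex.exp (2 * Real.pi * Complex.I * ((j : ℂ) - ((K:ℤ):ℂ)) * (x:ℂ)) := by
        intro j
        rw [hD, hKc]
        rw [show ρ j * Complex.exp (-((2 * (r : ℂ) + 1) * Real.pi * Complex.I * (τ * (n : ℂ) ^ 2)))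
              * Complex.exp (2 * Real.pi * Complex.I * ((j : ℂ) - (2 * (r : ℂ) + 1) * (n : ℂ)) * (x:ℂ))
            = ρ j * (Complex.exp (-((2 * (r : ℂ) + 1) * Real.pi * Complex.I * (τ * (n : ℂ) ^ 2)))
              * Complex.exp (2 * Real.pi * Complex.I * ((j : ℂ) - (2 * (r : ℂ) + 1) * (n : ℂ)) * (x:ℂ))) from by ring,
          ← Complex.exp_add]
        rw [show Complex.exp (-((2 * (r : ℂ) + 1) * Real.pi * Complex.I *
              (τ * (n : ℂ) ^ 2 + 2 * (n : ℂ) * (x:ℂ))))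
            * (ρ j * Complex.exp (2 * Real.pi * Complex.I * (j : ℂ) * (x:ℂ)))
            = ρ j * (Complex.exp (-((2 * (r : ℂ) + 1) * Real.pi * Complex.I *
              (τ * (n : ℂ) ^ 2 + 2 * (n : ℂ) * (x:ℂ))))
              * Complex.exp (2 * Real.pi * Complex.I * (j : ℂ) * (x:ℂ))) from by ring,
          ← Complex.exp_add]
        congr 2
        ring
      rw [tsum_congr hterm]
      rw [← (Equiv.addRight K).tsum_eq
        (fun j => ρ j * D * Complex.exp (2 * Real.pi * Complex.I * ((j : ℂ) - ((K:ℤ):ℂ)) * (x:ℂ)))]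
      apply tsum_congr; intro j
      simp only [Equiv.coe_addRight, hb]
      congr 2
      push_cast
      ring
    rw [hL, hR] at H
    have hsae : Summable fun j : ℤ => a j * Complex.exp (2 * Real.pi * Complex.I * (j : ℂ) * (x:ℂ)) := by
      apply Summable.of_norm
      refine (summable_congr fun j => ?_).mpr hsa
      rw [norm_mul, norm_exp_aux, mul_one]
    have hsbe : Summable fun j : ℤ => b j * Complex.exp (2 * Real.pi * Complex.I * (j : ℂ) * (x:ℂ)) := by
      apply Summable.of_norm
      refine (summable_congr fun j => ?_).mpr hsb
      rw [norm_mul, norm_exp_aux, mul_one]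
    have : ∀ j : ℤ, (a j - b j) * Complex.exp (2 * Real.pi * Complex.I * (j : ℂ) * (x:ℂ))
        = a j * Complex.exp (2 * Real.pi * Complex.I * (j : ℂ) * (x:ℂ))
          - b j * Complex.exp (2 * Real.pi * Complex.I * (j : ℂ) * (x:ℂ)) := fun j => by ring
    rw [tsum_congr this, Summable.tsum_sub hsae hsbe, H, sub_self]
  -- uniqueness of coefficients
  have hcsum : Summable fun j => ‖a j - b j‖ :=
    (hsa.add hsb).of_nonneg_of_le (fun j => norm_nonneg _) (fun j => norm_sub_le _ _)
  have key : a m - b m = 0 := coeff_unique (fun j => a j - b j) hcsum h0 m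
  have hab : a m = b m := sub_eq_zero.mp key
  -- conclude
  have hDne : D ≠ 0 := Complex.exp_ne_zero _
  apply mul_right_cancel₀ hDne
  have hbm : b m = ρ (m + K) * D := rfl
  rw [← hbm, ← hab, ha]
  simp only
  rw [mul_comm (Complex.exp (Real.pi * Complex.I * τ * (n : ℂ) *
        (2 * (m : ℂ) + (2 * (r : ℂ) + 1) * (n : ℂ)))) (ρ m), hD]
  conv_rhs => rw [mul_assoc, ← Complex.exp_add]
  congr 1
  congr 1
  ring
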